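/- Let β, γ, μ, ε > 0 and α ∈ (0,1) satisfy βγ²/4 < ε < βγ²/2, ε > βγ²/2 - (αγμ/2 - (1-α)μ²/(2β)), and γ > (1-α)μ/(αβ). Then the matrix A⁻ = [[-γβ, -(1/2)γαμ - ε, -(1/2)γαμ], [β, (1/2)αμ, (1/2)αμ], [β, (1/2)(α-2)μ, (1/2)(α-2)μ]] is Hurwitz. -/

import Mathlib

/-- Routh–Hurwitz for a monic cubic: if the coefficients are positive and
`c < a*b`, every complex root has negative real part. -/
lemma cubic_roots_neg_re (a b c : ℝ) (ha : 0 < a) (hb : 0 < b) (hc : 0 < c)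
    (hab : c < a * b) (z : ℂ) (hz : z ^ 3 + (a : ℂ) * z ^ 2 + (b : ℂ) * z + (c : ℂ) = 0) :
    z.re < 0 := by
  by_contra hx
  push_neg at hx
  rw [Complex.ext_iff] at hz
  simp only [Complex.add_re, Complex.add_im, Complex.mul_re, Complex.mul_im,
    Complex.ofReal_re, Complex.ofReal_im, Complex.zero_re, Complex.zero_im,
    pow_succ, pow_zero, one_mul, Complex.one_re, Complex.one_im] at hz
  obtain ⟨h1, h2⟩ := hz
  rcases eq_or_ne z.im 0 with hy | hy
  · rw [hy] at h1
    nlinarith [mul_nonneg (mul_nonneg hx hx) hx, mul_nonneg ha.le (mul_nonneg hx hx),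
      mul_nonneg hb.le hx]
  · have h2' : z.im * (3 * z.re ^ 2 - z.im ^ 2 + 2 * a * z.re + b) = 0 := by
      linear_combination h2
    have hy2 : z.im ^ 2 = 3 * z.re ^ 2 + 2 * a * z.re + b := by
      have := (mul_eq_zero.mp h2').resolve_left hy
      linarith
    have hc' : c = 8 * z.re ^ 3 + 8 * a * z.re ^ 2 + 2 * (b + a ^ 2) * z.re + a * b := by
      linear_combination h1 + (3 * z.re + a) * hy2
    nlinarith [mul_nonneg (mul_nonneg hx hx) hx, mul_nonneg ha.le (mul_nonneg hx hx),
      mul_nonneg (add_nonneg hb.le (sq_nonneg a)) hx]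

theorem Aminus_hurwitz_cond1 (α β γ μ ε : ℝ) (hβ : 0 < β) (hγ : 0 < γ) (hμ : 0 < μ)
    (hε : 0 < ε) (hα : α ∈ Set.Ioo (0:ℝ) 1)
    (h1 : β*γ^2/4 < ε) (h2 : ε < β*γ^2/2)
    (h3 : ε > β*γ^2/2 - (α*γ*μ/2 - (1-α)*μ^2/(2*β)))
    (h4 : γ > (1-α)*μ/(α*β)) :
    ∀ z ∈ spectrum ℂ
      ((!![-γ*β, -(1/2)*γ*α*μ - ε, -(1/2)*γ*α*μ;
           β, (1/2)*α*μ, (1/2)*α*μ;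
           β, (1/2)*(α-2)*μ, (1/2)*(α-2)*μ] : Matrix (Fin 3) (Fin 3) ℝ).map
        (Complex.ofReal)),
      z.re < 0 := by
  obtain ⟨hα0, hα1⟩ := hα
  intro z hz
  rw [spectrum.mem_iff] at hz
  have hdet : (algebraMap ℂ (Matrix (Fin 3) (Fin 3) ℂ) z -
      (!![-γ*β, -(1/2)*γ*α*μ - ε, -(1/2)*γ*α*μ;
           β, (1/2)*α*μ, (1/2)*α*μ;
           β, (1/2)*(α-2)*μ, (1/2)*(α-2)*μ] : Matrix (Fin 3) (Fin 3) ℝ).map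
        (Complex.ofReal)).det = 0 := by
    by_contra hne
    exact hz ((Matrix.isUnit_iff_isUnit_det _).mpr (isUnit_iff_ne_zero.mpr hne))
  have key : z ^ 3 + ((γ*β + (1-α)*μ : ℝ) : ℂ) * z ^ 2 + ((β*(γ*μ + ε) : ℝ) : ℂ) * z
      + ((ε*β*μ : ℝ) : ℂ) = 0 := by
    rw [Matrix.det_fin_three] at hdet
    norm_num [Matrix.algebraMap_matrix_apply, Matrix.map_apply, Matrix.vecHead,
      Matrix.vecTail, Fin.ext_iff] at hdet
    simp only [Matrix.cons_val_two, Matrix.cons_val_one, Matrix.cons_val_zero, Matrix.head_cons,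
      Matrix.tail_cons, Matrix.vecHead, Matrix.vecTail, Function.comp_apply, Matrix.cons_val_succ] at hdet
    push_cast at hdet ⊢
    linear_combination hdet
  have hone : (0:ℝ) < 1 - α := by linarith
  refine cubic_roots_neg_re _ _ _ ?_ ?_ ?_ ?_ z key
  · exact add_pos (mul_pos hγ hβ) (mul_pos hone hμ)
  · exact mul_pos hβ (add_pos (mul_pos hγ hμ) hε)
  · exact mul_pos (mul_pos hε hβ) hμ
  · have e1 : α*β*μ*ε < α*β*μ*(β*γ^2/2) :=
      mul_lt_mul_of_pos_left h2 (by positivity)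
    have e2 : α*β*μ*(β*γ^2/2) ≤ β^2*γ^2*μ := by
      nlinarith [mul_nonneg (show (0:ℝ) ≤ 2-α by linarith)
        (mul_pos (mul_pos hβ hβ) (mul_pos (mul_pos hγ hγ) hμ)).le]
    nlinarith [e1, e2, mul_pos (mul_pos hγ (mul_pos hβ hβ)) hε,
      mul_pos (mul_pos hone hβ) (mul_pos hγ (mul_pos hμ hμ))]
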